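/- Let A ∈ ℂ^{n×m} be nonzero with Gram matrix G = A*A, largest singular value σ_1, and let v_1 be a unit eigenvector of G with eigenvalue σ_1². Fix a column index c with A e_c ≠ 0 and v_1* e_c = 0. For each row index i with A_{ic} ≠ 0, let A^{(1)}(i,c) = A − (1/A_{ic}) A e_c e_i^T A and G^{(1)}(i,c) = A^{(1)}(i,c)* A^{(1)}(i,c). Then Σ_{i: A_{ic} ≠ 0} (|A_{ic}|²/‖A e_c‖₂²) · v_1* G^{(1)}(i,c) v_1 ≤ 2 σ_1². -/

import Mathlib

open Matrix Finset

/-- **Theorem (case 1 bound in the RPLU doubling proof).**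
Let `A ∈ ℂ^{n×m}` be nonzero, `G = AᴴA`, `σ₁` the largest singular value of `A`
(so `∑ₐ‖(Aw)ₐ‖² ≤ σ₁² ∑ₜ‖wₜ‖²` for all `w`), and `v₁` a unit eigenvector of `G` with
eigenvalue `σ₁²`.  Fix a column `c` with `A e_c ≠ 0` and `v₁ᴴ e_c = 0`.  With
`A¹(i,c) = A − A_{ic}⁻¹ A e_c e_iᵀ A` and `G¹(i,c) = A¹(i,c)ᴴ A¹(i,c)`, the expectation
over the row pivot `i ∼ |A_{ic}|²/‖A e_c‖₂²` satisfies `𝔼[v₁ᴴ G¹ v₁] ≤ 2 σ₁²`. -/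
theorem rplu_case1_bound {n m : ℕ} (A : Matrix (Fin n) (Fin m) ℂ) (hA : A ≠ 0)
    (σ1 : ℝ) (hσ1 : 0 ≤ σ1)
    (hop : ∀ w : Fin m → ℂ, (∑ a, ‖A.mulVec w a‖ ^ 2) ≤ σ1 ^ 2 * ∑ t, ‖w t‖ ^ 2)
    (v1 : Fin m → ℂ) (hv1unit : (∑ t, ‖v1 t‖ ^ 2) = 1)
    (heig : (Aᴴ * A).mulVec v1 = ((σ1 : ℂ) ^ 2) • v1)
    (c : Fin m) (hAc : A.mulVec (Pi.single c 1) ≠ 0)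
    (hvc : v1 c = 0) :
    (∑ i ∈ Finset.univ.filter (fun i : Fin n => A i c ≠ 0),
        (‖A i c‖ ^ 2 / ∑ a, ‖A a c‖ ^ 2) *
          (dotProduct (star v1)
            (((A - (A i c)⁻¹ • (A * Matrix.single c i (1 : ℂ) * A))ᴴ *
                (A - (A i c)⁻¹ • (A * Matrix.single c i (1 : ℂ) * A))).mulVec
              v1)).re)
      ≤ 2 * σ1 ^ 2 := by
  set u : Fin n → ℂ := A.mulVec v1 with hu
  set s : ℝ := ∑ a, ‖A a c‖ ^ 2 with hs
  set F : Finset (Fin n) := Finset.univ.filter (fun i : Fin n => A i c ≠ 0) with hF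
  -- s positivity
  have hAcol : ∃ a, A a c ≠ 0 := by
    by_contra h
    push_neg at h
    apply hAc
    funext a
    simp [Matrix.mulVec, dotProduct, Pi.single_apply, h a]
  have hterm_nonneg : ∀ a : Fin n, (0:ℝ) ≤ ‖A a c‖ ^ 2 := fun a => by positivity
  have hs_pos : 0 < s := by
    obtain ⟨a, ha⟩ := hAcol
    exact Finset.sum_pos' (fun b _ => hterm_nonneg b)
      ⟨a, Finset.mem_univ a, by
        have := norm_pos_iff.mpr ha
        positivity⟩
  -- s equals sum over F
  have hsF : s = ∑ i ∈ F, ‖A i c‖ ^ 2 := by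
    refine (Finset.sum_subset (Finset.subset_univ F) (fun i _ hi => ?_)).symm
    have : A i c = 0 := by
      by_contra hne
      exact hi (by simp [hF, hne])
    simp [this]
  -- key orthogonality
  have hkey : ∑ a, (starRingEnd ℂ) (A a c) * u a = 0 := by
    have h := congrFun heig c
    rw [← Matrix.mulVec_mulVec] at h
    simpa [Matrix.mulVec, dotProduct, Matrix.conjTranspose_apply, hvc, hu] using h
  -- per-i identity
  have hptwise : ∀ i ∈ F,
      (dotProduct (star v1)
            (((A - (A i c)⁻¹ • (A * Matrix.single c i (1 : ℂ) * A))ᴴ *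
                (A - (A i c)⁻¹ • (A * Matrix.single c i (1 : ℂ) * A))).mulVec
              v1)).re
        = (∑ a, ‖u a‖ ^ 2) + ‖u i‖ ^ 2 / ‖A i c‖ ^ 2 * s := by
    intro i hi
    have hAic : A i c ≠ 0 := by simpa [hF] using hi
    set B : Matrix (Fin n) (Fin m) ℂ :=
      A - (A i c)⁻¹ • (A * Matrix.single c i (1 : ℂ) * A) with hB
    set k : ℂ := (A i c)⁻¹ * u i with hk
    have hmul : ∀ a, (A * Matrix.single c i (1 : ℂ) * A).mulVec v1 a = A a c * u i := by
      intro a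
      simp [Matrix.mulVec, Matrix.mul_apply, Matrix.single, dotProduct,
        Finset.mul_sum, Finset.sum_mul, ite_and, Finset.sum_ite_eq, Finset.sum_ite_eq', mul_assoc, hu]
    have hw : ∀ a, B.mulVec v1 a = u a - k * A a c := by
      intro a
      rw [hB, Matrix.sub_mulVec]
      simp only [Pi.sub_apply, Matrix.smul_mulVec, Pi.smul_apply, smul_eq_mul, hmul a, hk, hu]
      ring
    have hdot : (dotProduct (star v1) ((Bᴴ * B).mulVec v1)).re
        = ∑ a, Complex.normSq (B.mulVec v1 a) := by
      rw [← Matrix.mulVec_mulVec, Matrix.dotProduct_mulVec, ← Matrix.star_mulVec,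
        dotProduct, Complex.re_sum]
      refine Finset.sum_congr rfl (fun a _ => ?_)
      simp [Complex.star_def, mul_comm, Complex.mul_conj]
    rw [hdot]
    have hexp : ∀ a, Complex.normSq (B.mulVec v1 a)
        = Complex.normSq (u a) + Complex.normSq k * Complex.normSq (A a c)
            - 2 * ((starRingEnd ℂ) k * ((starRingEnd ℂ) (A a c) * u a)).re := by
      intro a
      rw [hw a, Complex.normSq_sub, Complex.normSq_mul]
      congr 2
      rw [_root_.map_mul]
      ring_nf
    rw [Finset.sum_congr rfl (fun a _ => hexp a)]
    have hcross : ∑ a, ((starRingEnd ℂ) k * ((starRingEnd ℂ) (A a c) * u a)).re = 0 := by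
      rw [← Complex.re_sum, ← Finset.mul_sum, hkey, mul_zero, Complex.zero_re]
    have hnk : Complex.normSq k = ‖u i‖ ^ 2 / ‖A i c‖ ^ 2 := by
      rw [hk, Complex.normSq_mul, Complex.normSq_inv, Complex.sq_norm,
        Complex.sq_norm]
      ring
    have hns : ∀ z : ℂ, Complex.normSq z = ‖z‖ ^ 2 := fun z => by
      rw [Complex.sq_norm]
    simp only [Finset.sum_sub_distrib, Finset.sum_add_distrib, ← Finset.mul_sum, hcross, mul_zero,
      sub_zero, hnk, hns, hs]

  rw [Finset.sum_congr rfl (fun i hi => by rw [hptwise i hi])]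
  have hU : (∑ a, ‖u a‖ ^ 2) ≤ σ1 ^ 2 := by
    have := hop v1
    rwa [hv1unit, mul_one] at this
  have hF2 : (∑ i ∈ F, ‖u i‖ ^ 2) ≤ σ1 ^ 2 := by
    refine le_trans ?_ hU
    exact Finset.sum_le_sum_of_subset_of_nonneg (Finset.subset_univ F)
      (fun i _ _ => by positivity)
  calc ∑ i ∈ F, (‖A i c‖ ^ 2 / s) * ((∑ a, ‖u a‖ ^ 2) + ‖u i‖ ^ 2 / ‖A i c‖ ^ 2 * s)
      = ∑ i ∈ F, ((‖A i c‖ ^ 2 / s) * (∑ a, ‖u a‖ ^ 2) + ‖u i‖ ^ 2) := by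
        refine Finset.sum_congr rfl (fun i hi => ?_)
        have hAic : A i c ≠ 0 := by simpa [hF] using hi
        have h1 : ‖A i c‖ ^ 2 ≠ 0 := pow_ne_zero _ (norm_ne_zero_iff.mpr hAic)
        rw [mul_add]
        congr 1
        have h1' : ‖A i c‖ ^ 2 ≠ 0 := h1
        field_simp
    _ = (∑ i ∈ F, ‖A i c‖ ^ 2 / s * (∑ a, ‖u a‖ ^ 2)) + ∑ i ∈ F, ‖u i‖ ^ 2 := by
        rw [Finset.sum_add_distrib]
    _ ≤ σ1 ^ 2 + σ1 ^ 2 := by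
        refine add_le_add ?_ hF2
        have : (∑ i ∈ F, ‖A i c‖ ^ 2 / s * (∑ a, ‖u a‖ ^ 2))
            = (∑ i ∈ F, ‖A i c‖ ^ 2) / s * (∑ a, ‖u a‖ ^ 2) := by
          rw [Finset.sum_div, Finset.sum_mul]
        rw [this, ← hsF, div_self hs_pos.ne', one_mul]
        exact hU
    _ = 2 * σ1 ^ 2 := by ring
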